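/- Under the hypotheses of the well-posedness theorem (α < β; for each λ ∈ ]a,b[, J + λΦ has sequentially compact sub-level sets and a unique global minimum), the functions r ↦ x̂_r and r ↦ J(x̂_r) are continuous on ]α,β[, where x̂_r is the unique global minimum of J on Φ⁻¹(r). -/

import Mathlib

open Filter Topology

set_option linter.unusedSectionVars false
set_option linter.unusedVariables false
set_option maxHeartbeats 1000000
open Filter Topology

section Helpers
variable {X : Type*} [TopologicalSpace X] [T2Space X]

lemma auxA_seqClosed {s : Set X} (hs : IsSeqCompact s) {x : ℕ → X} {p : X}
    (hx : ∀ n, x n ∈ s) (hp : Tendsto x atTop (𝓝 p)) : p ∈ s := by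
  obtain ⟨c, hc, φ, hφ, hlim⟩ := hs hx
  have : Tendsto (x ∘ φ) atTop (𝓝 p) := hp.comp hφ.tendsto_atTop
  exact (tendsto_nhds_unique this hlim) ▸ hc

lemma auxA_le_of_eventually {A : X → ℝ} {C : ℝ}
    (hS : IsSeqCompact {x : X | A x ≤ C}) {x : ℕ → X} {w : X}
    (hx : ∀ᶠ j in atTop, A (x j) ≤ C) (hlim : Tendsto x atTop (𝓝 w)) : A w ≤ C := by
  obtain ⟨N, hN⟩ := eventually_atTop.1 hx
  exact auxA_seqClosed hS (fun j => hN _ (Nat.le_add_left _ _))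
    (hlim.comp (tendsto_add_atTop_nat N))

end Helpers

section Core
variable {X : Type*} [TopologicalSpace X] [T2Space X]
variable (J Φ : X → ℝ) (Λ : Set ℝ) (m : ℝ → X)

/-- value function -/
noncomputable def ψv : ℝ → ℝ := fun l => J (m l) + l * Φ (m l)

variable (hm : ∀ l ∈ Λ, ∀ z, J (m l) + l * Φ (m l) ≤ J z + l * Φ z)

section WithMin
include hm

/-- monotonicity: Φ∘m is antitone on Λ -/
lemma auxB_anti {l l' : ℝ} (hl : l ∈ Λ) (hl' : l' ∈ Λ) (h : l ≤ l') :
    Φ (m l') ≤ Φ (m l) := by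
  rcases eq_or_lt_of_le h with rfl | hlt
  · exact le_refl _
  have h1 := hm l hl (m l')
  have h2 := hm l' hl' (m l)
  nlinarith

/-- slope inequality : ψ μ ≤ ψ l + (μ - l) * Φ (m l) -/
lemma auxB_slope {l μ : ℝ} (hl : l ∈ Λ) (hμ : μ ∈ Λ) :
    ψv J Φ m μ ≤ ψv J Φ m l + (μ - l) * Φ (m l) := by
  have h1 := hm μ hμ (m l)
  simp only [ψv]
  nlinarith [h1]

/-- continuity of ψ along sequences in a compact subinterval of Λ -/
lemma auxB_psi_cont {ν : ℕ → ℝ} {c d lb : ℝ} (hc : c ∈ Λ) (hd : d ∈ Λ)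
    (hlbΛ : lb ∈ Λ) (hlb : lb ∈ Set.Icc c d)
    (hν : ∀ k, ν k ∈ Set.Icc c d) (hνΛ : ∀ k, ν k ∈ Λ)
    (hνlim : Tendsto ν atTop (𝓝 lb)) :
    Tendsto (fun k => ψv J Φ m (ν k)) atTop (𝓝 (ψv J Φ m lb)) := by
  set B : ℝ := max |Φ (m c)| |Φ (m d)| with hB
  have hbd : ∀ l ∈ Λ, l ∈ Set.Icc c d → |Φ (m l)| ≤ B := by
    intro l hlΛ hlcd
    have h1 : Φ (m d) ≤ Φ (m l) := auxB_anti J Φ Λ m hm hlΛ hd hlcd.2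
    have h2 : Φ (m l) ≤ Φ (m c) := auxB_anti J Φ Λ m hm hc hlΛ hlcd.1
    rw [abs_le]
    constructor
    · exact le_trans (neg_le_neg (le_max_right _ _)) (neg_abs_le _ |>.trans h1)
    · exact le_trans (h2.trans (le_abs_self _)) (le_max_left _ _)
  rw [tendsto_iff_dist_tendsto_zero]
  apply squeeze_zero (fun k => dist_nonneg)
    (g := fun k => B * dist (ν k) lb)
  · intro k
    have hs1 := auxB_slope J Φ Λ m hm hlbΛ (hνΛ k)
    have hs2 := auxB_slope J Φ Λ m hm (hνΛ k) hlbΛ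
    have hb1 := hbd lb hlbΛ hlb
    have hb2 := hbd (ν k) (hνΛ k) (hν k)
    rw [Real.dist_eq, Real.dist_eq, abs_le]
    have e1 : ψv J Φ m (ν k) - ψv J Φ m lb ≤ (ν k - lb) * Φ (m lb) := by linarith
    have e2 : ψv J Φ m lb - ψv J Φ m (ν k) ≤ (lb - ν k) * Φ (m (ν k)) := by linarith
    constructor
    · have : (lb - ν k) * Φ (m (ν k)) ≤ |ν k - lb| * B := by
        calc (lb - ν k) * Φ (m (ν k)) ≤ |(lb - ν k) * Φ (m (ν k))| := le_abs_self _
        _ = |ν k - lb| * |Φ (m (ν k))| := by rw [abs_mul, abs_sub_comm]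
        _ ≤ |ν k - lb| * B := by
            exact mul_le_mul_of_nonneg_left hb2 (abs_nonneg _)
      nlinarith [this]
    · have : (ν k - lb) * Φ (m lb) ≤ |ν k - lb| * B := by
        calc (ν k - lb) * Φ (m lb) ≤ |(ν k - lb) * Φ (m lb)| := le_abs_self _
        _ = |ν k - lb| * |Φ (m lb)| := by rw [abs_mul]
        _ ≤ |ν k - lb| * B := mul_le_mul_of_nonneg_left hb1 (abs_nonneg _)
      nlinarith [this]
  · have : Tendsto (fun k => dist (ν k) lb) atTop (𝓝 0) :=
      tendsto_iff_dist_tendsto_zero.1 hνlim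
    simpa using this.const_mul B

end WithMin
end Core

section Core2
variable {X : Type*} [TopologicalSpace X] [T2Space X]
variable (J Φ : X → ℝ) (Λ : Set ℝ) (m : ℝ → X)
variable (hm : ∀ l ∈ Λ, ∀ z, J (m l) + l * Φ (m l) ≤ J z + l * Φ z)
variable (hu : ∀ l ∈ Λ, ∀ z, (∀ z', J z + l * Φ z ≤ J z' + l * Φ z') → z = m l)
variable (hK : ∀ l ∈ Λ, ∀ C : ℝ, IsSeqCompact {x : X | J x + l * Φ x ≤ C})
variable (hconv : ∀ ⦃c d x : ℝ⦄, c ∈ Λ → d ∈ Λ → c ≤ x → x ≤ d → x ∈ Λ)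

include hm hu hK hconv in
lemma auxB_L2 {ν : ℕ → ℝ} {c d lb τ : ℝ} (hc : c ∈ Λ) (hd : d ∈ Λ) (hlbΛ : lb ∈ Λ)
    (hol : ∃ c' ∈ Λ, c' < lb) (hor : ∃ d' ∈ Λ, lb < d')
    (hν : ∀ k, ν k ∈ Set.Icc c d) (hνlim : Tendsto ν atTop (𝓝 lb))
    (hτ : Tendsto (fun k => Φ (m (ν k))) atTop (𝓝 τ)) :
    τ = Φ (m lb) ∧ Tendsto (fun k => m (ν k)) atTop (𝓝 (m lb)) := by
  have hνΛ : ∀ k, ν k ∈ Λ := fun k => hconv hc hd (hν k).1 (hν k).2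
  have hlb : lb ∈ Set.Icc c d :=
    isClosed_Icc.mem_of_tendsto hνlim (Eventually.of_forall hν)
  have hψ : Tendsto (fun k => ψv J Φ m (ν k)) atTop (𝓝 (ψv J Φ m lb)) :=
    auxB_psi_cont J Φ Λ m hm hc hd hlbΛ hlb hν hνΛ hνlim
  -- A_μ along the sequence converges
  have hAμ : ∀ μ : ℝ, Tendsto (fun k => J (m (ν k)) + μ * Φ (m (ν k))) atTop
      (𝓝 (ψv J Φ m lb + (μ - lb) * τ)) := by
    intro μ
    have h1 : Tendsto (fun k => ψv J Φ m (ν k) + (μ - ν k) * Φ (m (ν k))) atTop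
        (𝓝 (ψv J Φ m lb + (μ - lb) * τ)) := by
      exact hψ.add (((tendsto_const_nhds.sub hνlim).mul hτ))
    have h2 : ∀ k, ψv J Φ m (ν k) + (μ - ν k) * Φ (m (ν k))
        = J (m (ν k)) + μ * Φ (m (ν k)) := by
      intro k; simp only [ψv]; ring
    simpa only [h2] using h1
  -- uniform containment in a sequentially compact set
  set C0 : ℝ := ψv J Φ m c + (d - c) * (Φ (m c) - Φ (m d)) with hC0
  have hcont : ∀ k, J (m (ν k)) + c * Φ (m (ν k)) ≤ C0 := by
    intro k
    have hs := auxB_slope J Φ Λ m hm hc (hνΛ k)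
    have ha1 : Φ (m (ν k)) ≤ Φ (m c) := auxB_anti J Φ Λ m hm hc (hνΛ k) (hν k).1
    have ha2 : Φ (m d) ≤ Φ (m (ν k)) := auxB_anti J Φ Λ m hm (hνΛ k) hd (hν k).2
    have hid : J (m (ν k)) + c * Φ (m (ν k))
        = ψv J Φ m (ν k) + (c - ν k) * Φ (m (ν k)) := by simp only [ψv]; ring
    rw [hid, hC0]
    have h1 : (ν k - c) * (Φ (m c) - Φ (m (ν k))) ≤ (d - c) * (Φ (m c) - Φ (m d)) := by
      apply mul_le_mul (by linarith [(hν k).2]) (by linarith) (by linarith) (by linarith [hlb.1, hlb.2])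
    simp only [ψv] at hs ⊢
    nlinarith
  -- key extraction step
  have key : ∀ ns : ℕ → ℕ, Tendsto ns atTop atTop →
      ∃ ms : ℕ → ℕ, Tendsto (fun j => m (ν (ns (ms j)))) atTop (𝓝 (m lb)) ∧
        (∀ μ ∈ Λ, J (m lb) + μ * Φ (m lb) ≤ ψv J Φ m lb + (μ - lb) * τ) := by
    intro ns hns
    obtain ⟨w, hw, φ2, hφ2, hwl⟩ := hK c hc C0
      (x := fun j => m (ν (ns j))) (fun j => hcont (ns j))
    have hAw : ∀ μ ∈ Λ, J w + μ * Φ w ≤ ψv J Φ m lb + (μ - lb) * τ := by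
      intro μ hμ
      apply le_of_forall_pos_le_add
      intro ε hε
      have hev : ∀ᶠ k in atTop,
          J (m (ν k)) + μ * Φ (m (ν k)) ≤ ψv J Φ m lb + (μ - lb) * τ + ε := by
        have := (hAμ μ).eventually (eventually_le_nhds (by linarith : ψv J Φ m lb + (μ - lb) * τ < ψv J Φ m lb + (μ - lb) * τ + ε))
        exact this
      have hns2 : Tendsto (fun j => ns (φ2 j)) atTop atTop :=
        hns.comp hφ2.tendsto_atTop
      exact auxA_le_of_eventually (hK μ hμ _) (hns2.eventually hev) hwl
    have hwmin : ∀ z', J w + lb * Φ w ≤ J z' + lb * Φ z' := by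
      intro z'
      have h0 := hAw lb hlbΛ
      simp only [sub_self, zero_mul, add_zero] at h0
      exact h0.trans (by simpa [ψv] using hm lb hlbΛ z')
    have hwe : w = m lb := hu lb hlbΛ w hwmin
    subst hwe
    exact ⟨φ2, hwl, hAw⟩
  obtain ⟨_, _, hineq⟩ := key id tendsto_id
  obtain ⟨c', hc', hc'lt⟩ := hol
  obtain ⟨d', hd', hd'lt⟩ := hor
  have h1 := hineq c' hc'
  have h2 := hineq d' hd'
  simp only [ψv] at h1 h2
  have hτe : τ = Φ (m lb) := by nlinarith
  refine ⟨hτe, tendsto_of_subseq_tendsto fun ns hns => ?_⟩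
  obtain ⟨ms, hms, -⟩ := key ns hns
  exact ⟨ms, hms⟩

end Core2

section Core3
variable {X : Type*} [TopologicalSpace X] [T2Space X]
variable (J Φ : X → ℝ) (Λ : Set ℝ) (m : ℝ → X)
variable (hm : ∀ l ∈ Λ, ∀ z, J (m l) + l * Φ (m l) ≤ J z + l * Φ z)
variable (hu : ∀ l ∈ Λ, ∀ z, (∀ z', J z + l * Φ z ≤ J z' + l * Φ z') → z = m l)
variable (hK : ∀ l ∈ Λ, ∀ C : ℝ, IsSeqCompact {x : X | J x + l * Φ x ≤ C})
variable (hconv : ∀ ⦃c d x : ℝ⦄, c ∈ Λ → d ∈ Λ → c ≤ x → x ≤ d → x ∈ Λ)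

include hm hu hK hconv in
lemma auxB_IVT {l₁ l₂ r : ℝ} (h1 : l₁ ∈ Λ) (h2 : l₂ ∈ Λ)
    (hole : ∃ c' ∈ Λ, c' < l₁) (hore : ∃ d' ∈ Λ, l₂ < d')
    (hr1 : r < Φ (m l₁)) (hr2 : Φ (m l₂) < r) :
    ∃ μ ∈ Set.Icc l₁ l₂, Φ (m μ) = r := by
  have hlt : l₁ < l₂ := by
    by_contra h
    push_neg at h
    exact absurd (auxB_anti J Φ Λ m hm h2 h1 h) (by linarith)
  set E : Set ℝ := {l : ℝ | l ∈ Set.Icc l₁ l₂ ∧ r ≤ Φ (m l)} with hE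
  have hne : l₁ ∈ E := ⟨⟨le_refl _, hlt.le⟩, hr1.le⟩
  have hbdd : BddAbove E := ⟨l₂, fun x hx => hx.1.2⟩
  set μ := sSup E with hμdef
  have hμ1 : l₁ ≤ μ := le_csSup hbdd hne
  have hμ2 : μ ≤ l₂ := csSup_le ⟨l₁, hne⟩ (fun x hx => hx.1.2)
  have hμΛ : μ ∈ Λ := hconv h1 h2 hμ1 hμ2
  have hseq : ∀ C : ℝ, Tendsto (fun k : ℕ => C / (k + 2 : ℝ)) atTop (𝓝 0) := by
    intro C
    apply Tendsto.div_atTop tendsto_const_nhds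
    exact tendsto_atTop_add_const_right atTop 2 tendsto_natCast_atTop_atTop
  have hA : r ≤ Φ (m μ) := by
    rcases eq_or_lt_of_le hμ1 with heq | hlt1
    · exact heq ▸ hr1.le
    set ν : ℕ → ℝ := fun k => μ - (μ - l₁) / (k + 2 : ℝ) with hν
    have hp : ∀ k : ℕ, 0 < (μ - l₁) / (k + 2 : ℝ) ∧ (μ - l₁) / (k + 2 : ℝ) ≤ (μ - l₁) / 2 := by
      intro k
      constructor
      · apply div_pos (by linarith) (by positivity)
      · apply div_le_div_of_nonneg_left (by linarith) (by norm_num) (by norm_num [Nat.cast_nonneg])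
    have hνIcc : ∀ k, ν k ∈ Set.Icc l₁ μ := by
      intro k
      have := hp k
      constructor <;> simp only [hν] <;> nlinarith [this.1, this.2]
    have hνΛ : ∀ k, ν k ∈ Λ := fun k => hconv h1 hμΛ (hνIcc k).1 (hνIcc k).2
    have hνlim : Tendsto ν atTop (𝓝 μ) := by
      have := (hseq (μ - l₁)).const_sub μ
      simpa [hν] using this
    have hanti : Antitone (fun k : ℕ => Φ (m (ν k))) := by
      intro k k' hk
      apply auxB_anti J Φ Λ m hm (hνΛ k) (hνΛ k')
      simp only [hν]
      have h2 : (μ - l₁) / ((k':ℝ) + 2) ≤ (μ - l₁) / ((k:ℝ) + 2) := by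
        apply div_le_div_of_nonneg_left (by linarith) (by positivity)
        exact_mod_cast by exact_mod_cast add_le_add_left (Nat.cast_le.2 hk) 2
      linarith
    have hbdd2 : BddBelow (Set.range fun k : ℕ => Φ (m (ν k))) := by
      refine ⟨Φ (m μ), ?_⟩
      rintro x ⟨k, rfl⟩
      exact auxB_anti J Φ Λ m hm (hνΛ k) hμΛ (hνIcc k).2
    have hτlim : Tendsto (fun k : ℕ => Φ (m (ν k))) atTop (𝓝 (⨅ k, Φ (m (ν k)))) :=
      tendsto_atTop_ciInf hanti hbdd2
    have hτr : r ≤ ⨅ k, Φ (m (ν k)) := by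
      apply le_ciInf
      intro k
      have hklt : ν k < μ := by have := hp k; simp only [hν]; linarith [(hp k).1]
      obtain ⟨e, he, hek⟩ := exists_lt_of_lt_csSup ⟨l₁, hne⟩ hklt
      have heΛ : e ∈ Λ := hconv h1 h2 he.1.1 he.1.2
      exact le_trans he.2 (auxB_anti J Φ Λ m hm (hνΛ k) heΛ hek.le)
    obtain ⟨d', hd', hd'gt⟩ := hore
    have := (auxB_L2 J Φ Λ m hm hu hK hconv h1 hμΛ hμΛ ⟨l₁, h1, hlt1⟩
      ⟨d', hd', lt_of_le_of_lt hμ2 hd'gt⟩ hνIcc hνlim hτlim).1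
    linarith [this ▸ hτr]
  have hB : Φ (m μ) ≤ r := by
    rcases eq_or_lt_of_le hμ2 with heq | hlt2
    · exact heq.symm ▸ hr2.le
    set ν : ℕ → ℝ := fun k => μ + (l₂ - μ) / (k + 2 : ℝ) with hν
    have hp : ∀ k : ℕ, 0 < (l₂ - μ) / (k + 2 : ℝ) ∧ (l₂ - μ) / (k + 2 : ℝ) ≤ (l₂ - μ) / 2 := by
      intro k
      constructor
      · apply div_pos (by linarith) (by positivity)
      · apply div_le_div_of_nonneg_left (by linarith) (by norm_num) (by norm_num [Nat.cast_nonneg])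
    have hνIcc : ∀ k, ν k ∈ Set.Icc μ l₂ := by
      intro k
      have := hp k
      constructor <;> simp only [hν] <;> nlinarith [this.1, this.2]
    have hνΛ : ∀ k, ν k ∈ Λ := fun k => hconv hμΛ h2 (hνIcc k).1 (hνIcc k).2
    have hνlim : Tendsto ν atTop (𝓝 μ) := by
      have := (hseq (l₂ - μ)).const_add μ
      simpa [hν] using this
    have hmono : Monotone (fun k : ℕ => Φ (m (ν k))) := by
      intro k k' hk
      apply auxB_anti J Φ Λ m hm (hνΛ k') (hνΛ k)
      simp only [hν]
      have h2 : (l₂ - μ) / ((k':ℝ) + 2) ≤ (l₂ - μ) / ((k:ℝ) + 2) := by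
        apply div_le_div_of_nonneg_left (by linarith) (by positivity)
        exact_mod_cast by exact_mod_cast add_le_add_left (Nat.cast_le.2 hk) 2
      linarith
    have hbdd2 : BddAbove (Set.range fun k : ℕ => Φ (m (ν k))) := by
      refine ⟨Φ (m μ), ?_⟩
      rintro x ⟨k, rfl⟩
      exact auxB_anti J Φ Λ m hm hμΛ (hνΛ k) (hνIcc k).1
    have hτlim : Tendsto (fun k : ℕ => Φ (m (ν k))) atTop (𝓝 (⨆ k, Φ (m (ν k)))) :=
      tendsto_atTop_ciSup hmono hbdd2
    have hτr : (⨆ k, Φ (m (ν k))) ≤ r := by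
      apply ciSup_le
      intro k
      have hkgt : μ < ν k := by simp only [hν]; linarith [(hp k).1]
      by_contra hcon
      push_neg at hcon
      have : ν k ∈ E := ⟨⟨le_trans hμ1 hkgt.le, (hνIcc k).2⟩, hcon.le⟩
      exact absurd (le_csSup hbdd this) (by linarith)
    obtain ⟨c', hc', hc'lt⟩ := hole
    have := (auxB_L2 J Φ Λ m hm hu hK hconv hμΛ h2 hμΛ
      ⟨c', hc', lt_of_lt_of_le hc'lt hμ1⟩ ⟨l₂, h2, hlt2⟩ hνIcc hνlim hτlim).1
    linarith [this ▸ hτr]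
  exact ⟨μ, ⟨hμ1, hμ2⟩, le_antisymm hB hA⟩

end Core3

section Core4
variable {X : Type*} [TopologicalSpace X] [T2Space X]
variable (J Φ : X → ℝ) (Λ : Set ℝ) (m : ℝ → X)
variable (hm : ∀ l ∈ Λ, ∀ z, J (m l) + l * Φ (m l) ≤ J z + l * Φ z)
variable (hu : ∀ l ∈ Λ, ∀ z, (∀ z', J z + l * Φ z ≤ J z' + l * Φ z') → z = m l)
variable (hK : ∀ l ∈ Λ, ∀ C : ℝ, IsSeqCompact {x : X | J x + l * Φ x ≤ C})
variable (hconv : ∀ ⦃c d x : ℝ⦄, c ∈ Λ → d ∈ Λ → c ≤ x → x ≤ d → x ∈ Λ)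

include hm in
lemma auxB_top {r : ℝ} {z : X} (l0 : ℝ) (hl0 : l0 ∈ Λ) (hz : Φ z < r)
    (ht : ∀ l ∈ Λ, r ≤ Φ (m l)) (hub : ∀ M : ℝ, ∃ l ∈ Λ, M < l) : False := by
  obtain ⟨l, hl, hlgt⟩ := hub (max l0 ((J z - ψv J Φ m l0 + l0 * r) / (r - Φ z)))
  have hl0l : l0 < l := lt_of_le_of_lt (le_max_left _ _) hlgt
  have hslope := auxB_slope J Φ Λ m hm hl hl0
  have h2 : (l0 - l) * Φ (m l) ≤ (l0 - l) * r :=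
    mul_le_mul_of_nonpos_left (ht l hl) (by linarith)
  have h3 : ψv J Φ m l ≤ J z + l * Φ z := by simpa [ψv] using hm l hl z
  have h4 : (J z - ψv J Φ m l0 + l0 * r) / (r - Φ z) < l :=
    lt_of_le_of_lt (le_max_right _ _) hlgt
  have h5 : J z - ψv J Φ m l0 + l0 * r < l * (r - Φ z) :=
    (div_lt_iff₀ (by linarith)).1 h4
  linarith

include hm in
lemma auxB_bot {r : ℝ} {z : X} (l0 : ℝ) (hl0 : l0 ∈ Λ) (hz : r < Φ z)
    (ht : ∀ l ∈ Λ, Φ (m l) ≤ r) (hlb : ∀ M : ℝ, ∃ l ∈ Λ, l < M) : False := by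
  obtain ⟨l, hl, hllt⟩ := hlb (min l0 ((J z - ψv J Φ m l0 + l0 * r) / (r - Φ z)))
  have hl0l : l < l0 := lt_of_lt_of_le hllt (min_le_left _ _)
  have hslope := auxB_slope J Φ Λ m hm hl hl0
  have h2 : (l0 - l) * Φ (m l) ≤ (l0 - l) * r :=
    mul_le_mul_of_nonneg_left (ht l hl) (by linarith)
  have h3 : ψv J Φ m l ≤ J z + l * Φ z := by simpa [ψv] using hm l hl z
  have h4 : l < (J z - ψv J Φ m l0 + l0 * r) / (r - Φ z) :=
    lt_of_lt_of_le hllt (min_le_right _ _)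
  have h5 : J z - ψv J Φ m l0 + l0 * r < l * (r - Φ z) :=
    (lt_div_iff_of_neg (by linarith)).1 h4
  linarith

include hm hK in
lemma auxB_realb {r b' C : ℝ} (l0 : ℝ) (hl0 : l0 ∈ Λ) (hl0b : l0 < b')
    (hub : ∀ l ∈ Λ, l < b') (hIoo : Set.Ioo l0 b' ⊆ Λ)
    (ht : ∀ l ∈ Λ, r ≤ Φ (m l)) (hC : ∀ l ∈ Λ, ψv J Φ m l - l * r ≤ C) :
    ∃ w, (∀ z, J w + b' * Φ w ≤ J z + b' * Φ z) ∧ r ≤ Φ w := by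
  set ν : ℕ → ℝ := fun k => b' - (b' - l0) / (k + 2 : ℝ) with hν
  have hp : ∀ k : ℕ, 0 < (b' - l0) / (k + 2 : ℝ) ∧ (b' - l0) / (k + 2 : ℝ) ≤ (b' - l0) / 2 := by
    intro k
    exact ⟨div_pos (by linarith) (by positivity),
      div_le_div_of_nonneg_left (by linarith) (by norm_num) (by norm_num [Nat.cast_nonneg])⟩
  have hνIoo : ∀ k, ν k ∈ Set.Ioo l0 b' := by
    intro k
    have := hp k
    constructor <;> simp only [hν] <;> nlinarith [this.1, this.2]
  have hνΛ : ∀ k, ν k ∈ Λ := fun k => hIoo (hνIoo k)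
  have hνlim : Tendsto ν atTop (𝓝 b') := by
    have hseq : Tendsto (fun k : ℕ => (b' - l0) / (k + 2 : ℝ)) atTop (𝓝 0) :=
      Tendsto.div_atTop tendsto_const_nhds
        (tendsto_atTop_add_const_right atTop 2 tendsto_natCast_atTop_atTop)
    simpa [hν] using hseq.const_sub b'
  have hνmono : Monotone ν := by
    intro k k' hk
    simp only [hν]
    have : (b' - l0) / ((k':ℝ) + 2) ≤ (b' - l0) / ((k:ℝ) + 2) := by
      apply div_le_div_of_nonneg_left (by linarith) (by positivity)
      exact_mod_cast by exact_mod_cast add_le_add_left (Nat.cast_le.2 hk) 2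
    linarith
  have hFmono : ∀ l ∈ Λ, ∀ l' ∈ Λ, l ≤ l' →
      ψv J Φ m l - l * r ≤ ψv J Φ m l' - l' * r := by
    intro l hl l' hl' hll
    have hs := auxB_slope J Φ Λ m hm hl' hl
    have h2 : (l - l') * Φ (m l') ≤ (l - l') * r :=
      mul_le_mul_of_nonpos_left (ht l' hl') (by linarith)
    linarith
  have hbddF : BddAbove (Set.range fun k => ψv J Φ m (ν k) - ν k * r) := by
    refine ⟨C, ?_⟩
    rintro x ⟨k, rfl⟩
    exact hC (ν k) (hνΛ k)
  set L : ℝ := ⨆ k, (ψv J Φ m (ν k) - ν k * r) with hLdef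
  have hFL : Tendsto (fun k => ψv J Φ m (ν k) - ν k * r) atTop (𝓝 L) :=
    tendsto_atTop_ciSup
      (fun k k' hk => hFmono _ (hνΛ k) _ (hνΛ k') (hνmono hk)) hbddF
  have hFle : ∀ k, ψv J Φ m (ν k) - ν k * r ≤ L := fun k => le_ciSup hbddF k
  have hcont : ∀ k, J (m (ν k)) + l0 * Φ (m (ν k)) ≤ L + l0 * r := by
    intro k
    have h2 : (l0 - ν k) * Φ (m (ν k)) ≤ (l0 - ν k) * r :=
      mul_le_mul_of_nonpos_left (ht (ν k) (hνΛ k)) (by linarith [(hνIoo k).1])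
    have hid : J (m (ν k)) + l0 * Φ (m (ν k))
        = ψv J Φ m (ν k) + (l0 - ν k) * Φ (m (ν k)) := by simp only [ψv]; ring
    have := hFle k
    linarith
  obtain ⟨w, hw, φ2, hφ2, hwl⟩ := hK l0 hl0 (L + l0 * r) (x := fun k => m (ν k)) hcont
  have hAμ : ∀ μ ∈ Λ, J w + μ * Φ w ≤ L + μ * r := by
    intro μ hμ
    have hev : ∀ᶠ k in atTop, J (m (ν k)) + μ * Φ (m (ν k)) ≤ L + μ * r := by
      filter_upwards [hνlim.eventually (eventually_gt_nhds (hub μ hμ))] with k hk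
      have h2 : (μ - ν k) * Φ (m (ν k)) ≤ (μ - ν k) * r :=
        mul_le_mul_of_nonpos_left (ht (ν k) (hνΛ k)) (by linarith)
      have hid : J (m (ν k)) + μ * Φ (m (ν k))
          = ψv J Φ m (ν k) + (μ - ν k) * Φ (m (ν k)) := by simp only [ψv]; ring
      have := hFle k
      linarith
    exact auxA_le_of_eventually (hK μ hμ _) (hφ2.tendsto_atTop.eventually hev) hwl
  have hψlim : Tendsto (fun k => ψv J Φ m (ν k)) atTop (𝓝 (L + b' * r)) := by
    have := hFL.add (hνlim.mul_const r)
    simpa using this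
  have hlow : ∀ z, L + b' * r ≤ J z + b' * Φ z := by
    intro z
    apply le_of_tendsto_of_tendsto' hψlim
      (tendsto_const_nhds.add (hνlim.mul_const (Φ z)))
    intro k
    simpa [ψv] using hm (ν k) (hνΛ k) z
  have hup : J w + b' * Φ w ≤ L + b' * r := by
    apply le_of_tendsto_of_tendsto'
      (tendsto_const_nhds.add (hνlim.mul_const (Φ w)))
      (tendsto_const_nhds.add (hνlim.mul_const r))
    intro k
    exact hAμ (ν k) (hνΛ k)
  refine ⟨w, fun z => (hup.trans (hlow z)), ?_⟩
  have h1 := hAμ l0 hl0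
  have h2 := hlow w
  nlinarith

include hm hK in
lemma auxB_reala {r a' C : ℝ} (l0 : ℝ) (hl0 : l0 ∈ Λ) (hl0a : a' < l0)
    (hlb : ∀ l ∈ Λ, a' < l) (hIoo : Set.Ioo a' l0 ⊆ Λ)
    (ht : ∀ l ∈ Λ, Φ (m l) ≤ r) (hC : ∀ l ∈ Λ, ψv J Φ m l - l * r ≤ C) :
    ∃ w, (∀ z, J w + a' * Φ w ≤ J z + a' * Φ z) ∧ Φ w ≤ r := by
  set ν : ℕ → ℝ := fun k => a' + (l0 - a') / (k + 2 : ℝ) with hν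
  have hp : ∀ k : ℕ, 0 < (l0 - a') / (k + 2 : ℝ) ∧ (l0 - a') / (k + 2 : ℝ) ≤ (l0 - a') / 2 := by
    intro k
    exact ⟨div_pos (by linarith) (by positivity),
      div_le_div_of_nonneg_left (by linarith) (by norm_num) (by norm_num [Nat.cast_nonneg])⟩
  have hνIoo : ∀ k, ν k ∈ Set.Ioo a' l0 := by
    intro k
    have := hp k
    constructor <;> simp only [hν] <;> nlinarith [this.1, this.2]
  have hνΛ : ∀ k, ν k ∈ Λ := fun k => hIoo (hνIoo k)
  have hνlim : Tendsto ν atTop (𝓝 a') := by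
    have hseq : Tendsto (fun k : ℕ => (l0 - a') / (k + 2 : ℝ)) atTop (𝓝 0) :=
      Tendsto.div_atTop tendsto_const_nhds
        (tendsto_atTop_add_const_right atTop 2 tendsto_natCast_atTop_atTop)
    simpa [hν] using hseq.const_add a'
  have hνanti : Antitone ν := by
    intro k k' hk
    simp only [hν]
    have : (l0 - a') / ((k':ℝ) + 2) ≤ (l0 - a') / ((k:ℝ) + 2) := by
      apply div_le_div_of_nonneg_left (by linarith) (by positivity)
      exact_mod_cast by exact_mod_cast add_le_add_left (Nat.cast_le.2 hk) 2
    linarith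
  have hFanti : ∀ l ∈ Λ, ∀ l' ∈ Λ, l ≤ l' →
      ψv J Φ m l' - l' * r ≤ ψv J Φ m l - l * r := by
    intro l hl l' hl' hll
    have hs := auxB_slope J Φ Λ m hm hl hl'
    have h2 : (l' - l) * Φ (m l) ≤ (l' - l) * r :=
      mul_le_mul_of_nonneg_left (ht l hl) (by linarith)
    linarith
  have hbddF : BddAbove (Set.range fun k => ψv J Φ m (ν k) - ν k * r) := by
    refine ⟨C, ?_⟩
    rintro x ⟨k, rfl⟩
    exact hC (ν k) (hνΛ k)
  set L : ℝ := ⨆ k, (ψv J Φ m (ν k) - ν k * r) with hLdef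
  have hFL : Tendsto (fun k => ψv J Φ m (ν k) - ν k * r) atTop (𝓝 L) :=
    tendsto_atTop_ciSup
      (fun k k' hk => hFanti _ (hνΛ k') _ (hνΛ k) (hνanti hk)) hbddF
  have hFle : ∀ k, ψv J Φ m (ν k) - ν k * r ≤ L := fun k => le_ciSup hbddF k
  have hcont : ∀ k, J (m (ν k)) + l0 * Φ (m (ν k)) ≤ L + l0 * r := by
    intro k
    have h2 : (l0 - ν k) * Φ (m (ν k)) ≤ (l0 - ν k) * r :=
      mul_le_mul_of_nonneg_left (ht (ν k) (hνΛ k)) (by linarith [(hνIoo k).2])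
    have hid : J (m (ν k)) + l0 * Φ (m (ν k))
        = ψv J Φ m (ν k) + (l0 - ν k) * Φ (m (ν k)) := by simp only [ψv]; ring
    have := hFle k
    linarith
  obtain ⟨w, hw, φ2, hφ2, hwl⟩ := hK l0 hl0 (L + l0 * r) (x := fun k => m (ν k)) hcont
  have hAμ : ∀ μ ∈ Λ, J w + μ * Φ w ≤ L + μ * r := by
    intro μ hμ
    have hev : ∀ᶠ k in atTop, J (m (ν k)) + μ * Φ (m (ν k)) ≤ L + μ * r := by
      filter_upwards [hνlim.eventually (eventually_lt_nhds (hlb μ hμ))] with k hk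
      have h2 : (μ - ν k) * Φ (m (ν k)) ≤ (μ - ν k) * r :=
        mul_le_mul_of_nonneg_left (ht (ν k) (hνΛ k)) (by linarith)
      have hid : J (m (ν k)) + μ * Φ (m (ν k))
          = ψv J Φ m (ν k) + (μ - ν k) * Φ (m (ν k)) := by simp only [ψv]; ring
      have := hFle k
      linarith
    exact auxA_le_of_eventually (hK μ hμ _) (hφ2.tendsto_atTop.eventually hev) hwl
  have hψlim : Tendsto (fun k => ψv J Φ m (ν k)) atTop (𝓝 (L + a' * r)) := by
    have := hFL.add (hνlim.mul_const r)
    simpa using this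
  have hlow : ∀ z, L + a' * r ≤ J z + a' * Φ z := by
    intro z
    apply le_of_tendsto_of_tendsto' hψlim
      (tendsto_const_nhds.add (hνlim.mul_const (Φ z)))
    intro k
    simpa [ψv] using hm (ν k) (hνΛ k) z
  have hup : J w + a' * Φ w ≤ L + a' * r := by
    apply le_of_tendsto_of_tendsto'
      (tendsto_const_nhds.add (hνlim.mul_const (Φ w)))
      (tendsto_const_nhds.add (hνlim.mul_const r))
    intro k
    exact hAμ (ν k) (hνΛ k)
  refine ⟨w, fun z => (hup.trans (hlow z)), ?_⟩
  have h1 := hAμ l0 hl0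
  have h2 := hlow w
  nlinarith

end Core4

/-- Theorem 1 (continuous dependence): under the hypotheses of the well-posedness
theorem, the maps `r ↦ x̂_r` and `r ↦ J (x̂_r)` are continuous on `]α,β[`, where
`x̂_r` is the unique global minimum of `J` on `Φ⁻¹(r)`. -/
theorem stmt_15 {X : Type*} [TopologicalSpace X] [T2Space X] [Nonempty X]
    (J Φ : X → ℝ) (a b : EReal) (hab : a < b)
    (Ma Mb : Set X)
    (hMa : Ma = {x : X | ∃ a' : ℝ, a = (a' : EReal) ∧
      ∀ z : X, J x + a' * Φ x ≤ J z + a' * Φ z})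
    (hMb : Mb = {x : X | ∃ b' : ℝ, b = (b' : EReal) ∧
      ∀ z : X, J x + b' * Φ x ≤ J z + b' * Φ z})
    (alpha beta : EReal)
    (halpha : alpha = max (⨅ x : X, (Φ x : EReal)) (⨆ x : Mb, (Φ x.1 : EReal)))
    (hbeta : beta = min (⨆ x : X, (Φ x : EReal)) (⨅ x : Ma, (Φ x.1 : EReal)))
    (hαβ : alpha < beta)
    (hcpt : ∀ l : ℝ, a < (l : EReal) → (l : EReal) < b →
      ∀ r : ℝ, IsSeqCompact {x : X | J x + l * Φ x ≤ r})
    (hmin : ∀ l : ℝ, a < (l : EReal) → (l : EReal) < b →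
      ∃! x : X, ∀ z : X, J x + l * Φ x ≤ J z + l * Φ z)
    (xh : ℝ → X)
    (hxh : ∀ r : ℝ, alpha < (r : EReal) → (r : EReal) < beta →
      Φ (xh r) = r ∧ (∀ x : X, Φ x = r → J (xh r) ≤ J x) ∧
        (∀ x : X, Φ x = r → J x ≤ J (xh r) → x = xh r)) :
    ContinuousOn xh {r : ℝ | alpha < (r : EReal) ∧ (r : EReal) < beta} ∧
      ContinuousOn (fun r => J (xh r)) {r : ℝ | alpha < (r : EReal) ∧ (r : EReal) < beta} := by
  classical
  -- the open interval of real parameters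
  set Λ : Set ℝ := {l : ℝ | a < (l : EReal) ∧ (l : EReal) < b} with hΛdef
  -- the family of minimizers
  set m : ℝ → X := fun l =>
    if h : a < (l : EReal) ∧ (l : EReal) < b then (hmin l h.1 h.2).exists.choose
    else Classical.arbitrary X with hmdef
  have hmex : ∀ l ∈ Λ, ∀ z, J (m l) + l * Φ (m l) ≤ J z + l * Φ z := by
    intro l hl z
    have h : a < (l : EReal) ∧ (l : EReal) < b := hl
    simp only [hmdef, dif_pos h]
    exact (hmin l h.1 h.2).exists.choose_spec z
  have huni : ∀ l ∈ Λ, ∀ z, (∀ z', J z + l * Φ z ≤ J z' + l * Φ z') → z = m l := by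
    intro l hl z hz
    have h : a < (l : EReal) ∧ (l : EReal) < b := hl
    simp only [hmdef, dif_pos h]
    exact (hmin l h.1 h.2).unique hz (hmin l h.1 h.2).exists.choose_spec
  have hKs : ∀ l ∈ Λ, ∀ C : ℝ, IsSeqCompact {x : X | J x + l * Φ x ≤ C} :=
    fun l hl C => hcpt l hl.1 hl.2 C
  have hconv : ∀ ⦃c d x : ℝ⦄, c ∈ Λ → d ∈ Λ → c ≤ x → x ≤ d → x ∈ Λ := by
    intro c d x hc hd hcx hxd
    exact ⟨lt_of_lt_of_le hc.1 (EReal.coe_le_coe_iff.2 hcx),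
      lt_of_le_of_lt (EReal.coe_le_coe_iff.2 hxd) hd.2⟩
  have holΛ : ∀ l ∈ Λ, ∃ c ∈ Λ, c < l := by
    intro l hl
    obtain ⟨y, hy1, hy2⟩ := EReal.exists_between_coe_real hl.1
    exact ⟨y, ⟨hy1, lt_trans hy2 hl.2⟩, EReal.coe_lt_coe_iff.1 hy2⟩
  have horΛ : ∀ l ∈ Λ, ∃ d ∈ Λ, l < d := by
    intro l hl
    obtain ⟨y, hy1, hy2⟩ := EReal.exists_between_coe_real hl.2
    exact ⟨y, ⟨lt_trans hl.1 hy1, hy2⟩, EReal.coe_lt_coe_iff.1 hy1⟩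
  obtain ⟨l₀, hl₀a, hl₀b⟩ := EReal.exists_between_coe_real hab
  have hl₀ : l₀ ∈ Λ := ⟨hl₀a, hl₀b⟩
  -- identification of the constrained minimizer
  have hident : ∀ r : ℝ, alpha < (r : EReal) → (r : EReal) < beta →
      ∀ μ ∈ Λ, Φ (m μ) = r → m μ = xh r := by
    intro r hr1 hr2 μ hμ hΦμ
    obtain ⟨hΦr, hminr, hunir⟩ := hxh r hr1 hr2
    apply hunir (m μ) hΦμ
    have := hmex μ hμ (xh r)
    rw [hΦμ, hΦr] at this
    linarith
  -- bound on the dual function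
  have hCbound : ∀ r : ℝ, alpha < (r : EReal) → (r : EReal) < beta →
      ∀ l ∈ Λ, ψv J Φ m l - l * r ≤ J (xh r) := by
    intro r hr1 hr2 l hl
    have h1 := hmex l hl (xh r)
    rw [(hxh r hr1 hr2).1] at h1
    simp only [ψv]
    linarith
  -- there is a parameter whose minimizer has Φ-value below r
  have hbelow : ∀ r : ℝ, alpha < (r : EReal) → (r : EReal) < beta →
      ∃ l₂ ∈ Λ, Φ (m l₂) < r := by
    intro r hr1 hr2
    by_contra hcon
    push_neg at hcon
    have ht : ∀ l ∈ Λ, r ≤ Φ (m l) := hcon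
    have hbne : b ≠ ⊥ := fun h => absurd (h ▸ hab) (not_lt_bot)
    by_cases hbt : b = ⊤
    · -- b = ⊤ : use a point with Φ z < r
      have hinf : (⨅ x : X, (Φ x : EReal)) < (r : EReal) :=
        lt_of_le_of_lt (halpha ▸ le_max_left _ _) hr1
      obtain ⟨z, hz⟩ := iInf_lt_iff.1 hinf
      have hzr : Φ z < r := EReal.coe_lt_coe_iff.1 hz
      refine auxB_top J Φ Λ m hmex l₀ hl₀ hzr ht ?_
      intro M
      refine ⟨max M l₀ + 1, ⟨?_, ?_⟩, by simp [lt_add_of_le_of_pos, le_max_left]⟩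
      · exact lt_of_lt_of_le hl₀a (EReal.coe_le_coe_iff.2 (by
          have := le_max_right M l₀; linarith))
      · rw [hbt]; exact EReal.coe_lt_top _
    · -- b real
      obtain ⟨b', hb'⟩ : ∃ b' : ℝ, b = (b' : EReal) :=
        ⟨b.toReal, (EReal.coe_toReal hbt hbne).symm⟩
      have hub : ∀ l ∈ Λ, l < b' := by
        intro l hl
        exact EReal.coe_lt_coe_iff.1 (hb' ▸ hl.2)
      have hl₀b' : l₀ < b' := hub l₀ hl₀
      have hIoo : Set.Ioo l₀ b' ⊆ Λ := by
        intro l hlmem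
        refine ⟨lt_trans hl₀a (EReal.coe_lt_coe_iff.2 hlmem.1), ?_⟩
        rw [hb']
        exact EReal.coe_lt_coe_iff.2 hlmem.2
      obtain ⟨w, hwmin, hwr⟩ := auxB_realb J Φ Λ m hmex hKs l₀ hl₀ hl₀b' hub hIoo ht
        (hCbound r hr1 hr2)
      have hwMb : w ∈ Mb := by
        rw [hMb]
        exact ⟨b', hb', hwmin⟩
      have : (Φ w : EReal) ≤ alpha := by
        rw [halpha]
        exact le_trans (le_iSup (fun x : Mb => (Φ x.1 : EReal)) ⟨w, hwMb⟩) (le_max_right _ _)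
      exact absurd (lt_of_le_of_lt this hr1) (by
        exact not_lt_of_ge (EReal.coe_le_coe_iff.2 hwr))
  -- there is a parameter whose minimizer has Φ-value above r
  have habove : ∀ r : ℝ, alpha < (r : EReal) → (r : EReal) < beta →
      ∃ l₁ ∈ Λ, r < Φ (m l₁) := by
    intro r hr1 hr2
    by_contra hcon
    push_neg at hcon
    have ht : ∀ l ∈ Λ, Φ (m l) ≤ r := hcon
    have hane : a ≠ ⊤ := fun h => absurd (h ▸ hab) (by simp)
    by_cases hat : a = ⊥
    · have hsup : (r : EReal) < (⨆ x : X, (Φ x : EReal)) :=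
        lt_of_lt_of_le hr2 (hbeta ▸ min_le_left _ _)
      obtain ⟨z, hz⟩ := lt_iSup_iff.1 hsup
      have hzr : r < Φ z := EReal.coe_lt_coe_iff.1 hz
      refine auxB_bot J Φ Λ m hmex l₀ hl₀ hzr ht ?_
      intro M
      refine ⟨min M l₀ - 1, ⟨?_, ?_⟩, by simp [sub_lt_iff_lt_add, lt_add_of_le_of_pos, min_le_left]⟩
      · rw [hat]; exact bot_lt_iff_ne_bot.2 (EReal.coe_ne_bot _)
      · exact lt_of_le_of_lt (EReal.coe_le_coe_iff.2 (by
          have := min_le_right M l₀; linarith)) hl₀b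
    · obtain ⟨a', ha'⟩ : ∃ a' : ℝ, a = (a' : EReal) :=
        ⟨a.toReal, (EReal.coe_toReal hane hat).symm⟩
      have hlb : ∀ l ∈ Λ, a' < l := by
        intro l hl
        exact EReal.coe_lt_coe_iff.1 (ha' ▸ hl.1)
      have ha'l₀ : a' < l₀ := hlb l₀ hl₀
      have hIoo : Set.Ioo a' l₀ ⊆ Λ := by
        intro l hlmem
        refine ⟨?_, lt_trans (EReal.coe_lt_coe_iff.2 hlmem.2) hl₀b⟩
        rw [ha']
        exact EReal.coe_lt_coe_iff.2 hlmem.1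
      obtain ⟨w, hwmin, hwr⟩ := auxB_reala J Φ Λ m hmex hKs l₀ hl₀ ha'l₀ hlb hIoo ht
        (hCbound r hr1 hr2)
      have hwMa : w ∈ Ma := by
        rw [hMa]
        exact ⟨a', ha', hwmin⟩
      have : beta ≤ (Φ w : EReal) := by
        rw [hbeta]
        exact le_trans (min_le_right _ _) (iInf_le (fun x : Ma => (Φ x.1 : EReal)) ⟨w, hwMa⟩)
      exact absurd (lt_of_lt_of_le hr2 this) (by
        exact not_lt_of_ge (EReal.coe_le_coe_iff.2 hwr))
  -- main continuity statement at each point of the interval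
  have main : ∀ r₀ : ℝ, alpha < (r₀ : EReal) → (r₀ : EReal) < beta →
      ContinuousAt xh r₀ ∧ ContinuousAt (fun r => J (xh r)) r₀ := by
    intro r₀ hr₀1 hr₀2
    obtain ⟨l₁, hl₁Λ, hl₁t⟩ := habove r₀ hr₀1 hr₀2
    obtain ⟨l₂, hl₂Λ, hl₂t⟩ := hbelow r₀ hr₀1 hr₀2
    have hole := holΛ l₁ hl₁Λ
    have hore := horΛ l₂ hl₂Λ
    have hl₁l₂ : l₁ < l₂ := by
      by_contra h
      push_neg at h
      exact absurd (auxB_anti J Φ Λ m hmex hl₂Λ hl₁Λ h) (by linarith)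
    have hIccΛ : Set.Icc l₁ l₂ ⊆ Λ := fun x hx => hconv hl₁Λ hl₂Λ hx.1 hx.2
    -- the IVT selection for nearby values
    have hsel : ∀ r : ℝ, Φ (m l₂) < r → r < Φ (m l₁) →
        ∃ μ ∈ Set.Icc l₁ l₂, Φ (m μ) = r :=
      fun r h2 h1 => auxB_IVT J Φ Λ m hmex huni hKs hconv hl₁Λ hl₂Λ hole hore h1 h2
    obtain ⟨μs, hμsIcc, hμst⟩ := hsel r₀ hl₂t hl₁t
    have hμsΛ : μs ∈ Λ := hIccΛ hμsIcc
    have hxr₀ : m μs = xh r₀ := hident r₀ hr₀1 hr₀2 μs hμsΛ hμst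
    -- sequential criterion
    have hseqmain : ∀ u : ℕ → ℝ, Tendsto u atTop (𝓝 r₀) →
        Tendsto (fun n => xh (u n)) atTop (𝓝 (xh r₀)) ∧
          Tendsto (fun n => J (xh (u n))) atTop (𝓝 (J (xh r₀))) := by
      intro u hu
      set P : ℕ → Prop := fun n => (alpha < (u n : EReal) ∧ (u n : EReal) < beta) ∧
        Φ (m l₂) < u n ∧ u n < Φ (m l₁) with hPdef
      have hPev : ∀ᶠ n in atTop, P n := by
        obtain ⟨p, hp1, hp2⟩ := EReal.exists_between_coe_real hr₀1
        obtain ⟨q, hq1, hq2⟩ := EReal.exists_between_coe_real hr₀2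
        have e1 : ∀ᶠ n in atTop, p < u n :=
          hu.eventually (eventually_gt_nhds (EReal.coe_lt_coe_iff.1 hp2))
        have e2 : ∀ᶠ n in atTop, u n < q :=
          hu.eventually (eventually_lt_nhds (EReal.coe_lt_coe_iff.1 hq1))
        have e3 : ∀ᶠ n in atTop, Φ (m l₂) < u n :=
          hu.eventually (eventually_gt_nhds hl₂t)
        have e4 : ∀ᶠ n in atTop, u n < Φ (m l₁) :=
          hu.eventually (eventually_lt_nhds hl₁t)
        filter_upwards [e1, e2, e3, e4] with n h1 h2 h3 h4
        exact ⟨⟨lt_of_lt_of_le hp1 (EReal.coe_le_coe_iff.2 h1.le),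
          lt_of_le_of_lt (EReal.coe_le_coe_iff.2 h2.le) hq2⟩, h3, h4⟩
      set ν : ℕ → ℝ := fun n => if h : P n then (hsel (u n) h.2.1 h.2.2).choose else μs
        with hνdef
      have hνIcc : ∀ n, ν n ∈ Set.Icc l₁ l₂ := by
        intro n
        by_cases h : P n
        · simp only [hνdef, dif_pos h]
          exact (hsel (u n) h.2.1 h.2.2).choose_spec.1
        · simp only [hνdef, dif_neg h]
          exact hμsIcc
      have hνgood : ∀ n, P n → Φ (m (ν n)) = u n ∧ m (ν n) = xh (u n) := by
        intro n hn
        have hspec := (hsel (u n) hn.2.1 hn.2.2).choose_spec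
        have h1 : Φ (m (ν n)) = u n := by
          simp only [hνdef, dif_pos hn]
          exact hspec.2
        exact ⟨h1, hident (u n) hn.1.1 hn.1.2 (ν n)
          (hIccΛ (hνIcc n)) h1⟩
      -- common subsequence extraction
      have hext : ∀ ns : ℕ → ℕ, Tendsto ns atTop atTop →
          ∃ ms : ℕ → ℕ, ∃ lc ∈ Set.Icc l₁ l₂,
            m lc = xh r₀ ∧ Φ (m lc) = r₀ ∧
            Tendsto (fun j => ν (ns (ms j))) atTop (𝓝 lc) ∧
            Tendsto (fun j => m (ν (ns (ms j)))) atTop (𝓝 (m lc)) ∧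
            Tendsto (fun j => u (ns (ms j))) atTop (𝓝 r₀) ∧
            (∀ᶠ j in atTop, P (ns (ms j))) := by
        intro ns hns
        obtain ⟨lc, hlcmem, ms, hmsSM, hmslim⟩ :=
          (isCompact_Icc (a := l₁) (b := l₂)).tendsto_subseq (fun j => hνIcc (ns j))
        have hlcΛ : lc ∈ Λ := hIccΛ hlcmem
        have hPev2 : ∀ᶠ j in atTop, P (ns (ms j)) :=
          (hns.comp hmsSM.tendsto_atTop).eventually hPev
        have hulim : Tendsto (fun j => u (ns (ms j))) atTop (𝓝 r₀) :=
          hu.comp (hns.comp hmsSM.tendsto_atTop)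
        have hτ : Tendsto (fun j => Φ (m (ν (ns (ms j))))) atTop (𝓝 r₀) := by
          apply hulim.congr'
          filter_upwards [hPev2] with j hj
          exact ((hνgood _ hj).1).symm
        have hL2 := auxB_L2 J Φ Λ m hmex huni hKs hconv hl₁Λ hl₂Λ hlcΛ
          (by obtain ⟨c', hc', hc'lt⟩ := hole; exact ⟨c', hc', lt_of_lt_of_le hc'lt hlcmem.1⟩)
          (by obtain ⟨d', hd', hd'lt⟩ := hore; exact ⟨d', hd', lt_of_le_of_lt hlcmem.2 hd'lt⟩)
          (fun j => hνIcc (ns (ms j))) hmslim hτ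
        have hΦlc : Φ (m lc) = r₀ := hL2.1.symm
        exact ⟨ms, lc, hlcmem, hident r₀ hr₀1 hr₀2 lc hlcΛ hΦlc, hΦlc, hmslim, hL2.2,
          hulim, hPev2⟩
      constructor
      · apply tendsto_of_subseq_tendsto
        intro ns hns
        obtain ⟨ms, lc, hlcmem, hlcid, hΦlc, hνlim, hmlim, hulim, hPev2⟩ := hext ns hns
        refine ⟨ms, ?_⟩
        rw [hlcid] at hmlim
        apply hmlim.congr'
        filter_upwards [hPev2] with j hj
        exact (hνgood _ hj).2
      · apply tendsto_of_subseq_tendsto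
        intro ns hns
        obtain ⟨ms, lc, hlcmem, hlcid, hΦlc, hνlim, hmlim, hulim, hPev2⟩ := hext ns hns
        refine ⟨ms, ?_⟩
        have hψ : Tendsto (fun j => ψv J Φ m (ν (ns (ms j)))) atTop (𝓝 (ψv J Φ m lc)) :=
          auxB_psi_cont J Φ Λ m hmex hl₁Λ hl₂Λ (hIccΛ hlcmem) hlcmem
            (fun j => hνIcc (ns (ms j))) (fun j => hIccΛ (hνIcc (ns (ms j)))) hνlim
        have hlim2 : Tendsto
            (fun j => ψv J Φ m (ν (ns (ms j))) - ν (ns (ms j)) * u (ns (ms j)))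
            atTop (𝓝 (ψv J Φ m lc - lc * r₀)) := hψ.sub (hνlim.mul hulim)
        have hval : ψv J Φ m lc - lc * r₀ = J (xh r₀) := by
          simp only [ψv]
          rw [hΦlc, hlcid]
          ring
        rw [hval] at hlim2
        apply hlim2.congr'
        filter_upwards [hPev2] with j hj
        have e1 := (hνgood _ hj).1
        have e2 := (hνgood _ hj).2
        simp only [ψv]
        rw [e1, e2]
        ring
    exact ⟨tendsto_iff_seq_tendsto.2 (fun u hu => (hseqmain u hu).1),
      tendsto_iff_seq_tendsto.2 (fun u hu => (hseqmain u hu).2)⟩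
  exact ⟨fun r hr => ((main r hr.1 hr.2).1).continuousWithinAt,
    fun r hr => ((main r hr.1 hr.2).2).continuousWithinAt⟩
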